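/- Under the standing hypotheses (Lipschitz fibre maps, exponential contraction along local stable fibres with rate α, and α·Q_f < 1), for each θ and each θ' in the local stable fibre of θ, the sequence of maps G_{θ,θ',n} : K_n(θ) → K_n(θ'), y ↦ f^n_{S^{−n}θ'} ∘ (f^n_{S^{−n}θ})⁻¹(y), is uniformly Cauchy on K(θ): for all n and k ≥ 0, d⁰(G_{θ,θ',n} ∘ G_{θ,θ',n+k}⁻¹, id) ≤ C'(αQ_f)^n d(θ,θ') where C' = αCL/(1 − αQ_f). Consequently, G_{θ,θ'} := lim_{n→∞} G_{θ,θ',n} exists uniformly on K(θ). -/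

import Mathlib

open Set Filter Metric

/-- Iterates of the fibre maps: `fiter S f n θ = f_{S^{n-1}θ} ∘ ⋯ ∘ f_θ`. -/
def fiter {Θ : Type*} (S : Θ → Θ) (f : Θ → ℝ → ℝ) : ℕ → Θ → ℝ → ℝ
  | 0, _, y => y
  | n + 1, θ, y => f (S^[n] θ) (fiter S f n θ y)

section Aux

variable {Θ : Type*} (S : Θ → Θ) (f : Θ → ℝ → ℝ)

lemma fiter_succ (n : ℕ) (θ : Θ) (y : ℝ) :
    fiter S f (n + 1) θ y = f (S^[n] θ) (fiter S f n θ y) := rfl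

lemma fiter_add (n k : ℕ) (θ : Θ) (y : ℝ) :
    fiter S f (n + k) θ y = fiter S f n (S^[k] θ) (fiter S f k θ y) := by
  induction n with
  | zero => simp [fiter]
  | succ n ih =>
      have h1 : n + 1 + k = (n + k) + 1 := by omega
      rw [h1, fiter_succ, ih, fiter_succ, Function.iterate_add_apply]

variable {M : ℝ}

lemma fiter_mapsTo (hmaps : ∀ θ, MapsTo (f θ) (Icc (-M) M) (Ioo (-M) M))
    (n : ℕ) (θ : Θ) : MapsTo (fiter S f n θ) (Icc (-M) M) (Icc (-M) M) := by
  induction n with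
  | zero => exact fun y hy => hy
  | succ n ih => exact fun y hy => Ioo_subset_Icc_self (hmaps _ (ih hy))

lemma fiter_mono (hmaps : ∀ θ, MapsTo (f θ) (Icc (-M) M) (Ioo (-M) M))
    (hmono : ∀ θ, StrictMonoOn (f θ) (Icc (-M) M))
    (n : ℕ) (θ : Θ) : StrictMonoOn (fiter S f n θ) (Icc (-M) M) := by
  induction n with
  | zero => exact fun a _ b _ h => h
  | succ n ih =>
      intro a ha b hb hab
      exact hmono _ (fiter_mapsTo S f hmaps n θ ha) (fiter_mapsTo S f hmaps n θ hb)
        (ih ha hb hab)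

lemma fiter_cont (hC1 : ∀ θ, ContDiffOn ℝ 1 (f θ) (Icc (-M) M))
    (hmaps : ∀ θ, MapsTo (f θ) (Icc (-M) M) (Ioo (-M) M))
    (n : ℕ) (θ : Θ) : ContinuousOn (fiter S f n θ) (Icc (-M) M) := by
  induction n with
  | zero => exact continuousOn_id
  | succ n ih =>
      exact ((hC1 _).continuousOn).comp ih (fiter_mapsTo S f hmaps n θ)

lemma fiter_lip (hM : 0 < M) {Qf : ℝ}
    (hmaps : ∀ θ, MapsTo (f θ) (Icc (-M) M) (Ioo (-M) M))
    (hC1 : ∀ θ, ContDiffOn ℝ 1 (f θ) (Icc (-M) M))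
    (hpos : ∀ θ, ∀ y ∈ Icc (-M) M, 0 < derivWithin (f θ) (Icc (-M) M) y)
    (hQf : ∀ θ, ∀ y ∈ Icc (-M) M, derivWithin (f θ) (Icc (-M) M) y ≤ Qf)
    (n : ℕ) (θ : Θ) : ∀ a ∈ Icc (-M) M, ∀ b ∈ Icc (-M) M,
      |fiter S f n θ a - fiter S f n θ b| ≤ Qf ^ n * |a - b| := by
  have step : ∀ ϑ : Θ, ∀ a ∈ Icc (-M) M, ∀ b ∈ Icc (-M) M,
      |f ϑ a - f ϑ b| ≤ Qf * |a - b| := by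
    intro ϑ a ha b hb
    have := Convex.norm_image_sub_le_of_norm_derivWithin_le (𝕜 := ℝ)
      ((hC1 ϑ).differentiableOn one_ne_zero)
      (fun x hx => by
        rw [Real.norm_eq_abs, abs_of_pos (hpos ϑ x hx)]
        exact hQf ϑ x hx)
      (convex_Icc _ _) hb ha
    simpa [Real.norm_eq_abs] using this
  induction n with
  | zero =>
      intro a _ b _
      simp [fiter]
  | succ n ih =>
      intro a ha b hb
      calc |fiter S f (n+1) θ a - fiter S f (n+1) θ b|
          ≤ Qf * |fiter S f n θ a - fiter S f n θ b| :=
            step _ _ (fiter_mapsTo S f hmaps n θ ha) _ (fiter_mapsTo S f hmaps n θ hb)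
        _ ≤ Qf * (Qf ^ n * |a - b|) := by
            have h0 : (0:ℝ) ∈ Icc (-M) M := by constructor <;> linarith
            have hQ0 : (0:ℝ) ≤ Qf :=
              le_of_lt (lt_of_lt_of_le (hpos θ 0 h0) (hQf θ 0 h0))
            exact mul_le_mul_of_nonneg_left (ih a ha b hb) hQ0
        _ = Qf ^ (n+1) * |a - b| := by ring

end Aux

lemma iter_cancel {Θ : Type*} (S : Θ ≃ Θ) (k m : ℕ) (x : Θ) :
    (⇑S)^[k] ((⇑S.symm)^[m + k] x) = (⇑S.symm)^[m] x := by
  rw [add_comm, Function.iterate_add_apply]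
  exact (S.right_inv.iterate k) _

theorem stmt3 {Θ : Type*} [MetricSpace Θ] [CompactSpace Θ]
    (S : Θ ≃ Θ) (M : ℝ) (hM : 0 < M)
    (f : Θ → ℝ → ℝ)
    (hmaps : ∀ θ, MapsTo (f θ) (Icc (-M) M) (Ioo (-M) M))
    (hmono : ∀ θ, StrictMonoOn (f θ) (Icc (-M) M))
    (hC1 : ∀ θ, ContDiffOn ℝ 1 (f θ) (Icc (-M) M))
    (hpos : ∀ θ, ∀ y ∈ Icc (-M) M, 0 < derivWithin (f θ) (Icc (-M) M) y)
    (L C α Qf : ℝ) (hL : 0 ≤ L) (hC : 0 < C) (hα : α ∈ Ioo (0:ℝ) 1)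
    (hLip : ∀ θ θ' : Θ, ∀ y ∈ Icc (-M) M, |f θ y - f θ' y| ≤ L * dist θ θ')
    (hQf : ∀ θ, ∀ y ∈ Icc (-M) M, derivWithin (f θ) (Icc (-M) M) y ≤ Qf)
    (hαQ : α * Qf < 1)
    -- the bounding graphs φ⁻ ≤ φ⁺ as monotone pullback limits
    (φm φp : Θ → ℝ)
    (hφp : ∀ ϑ : Θ, Antitone (fun n => fiter S f n ((⇑S.symm)^[n] ϑ) M) ∧
      Tendsto (fun n => fiter S f n ((⇑S.symm)^[n] ϑ) M) atTop (nhds (φp ϑ)))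
    (hφm : ∀ ϑ : Θ, Monotone (fun n => fiter S f n ((⇑S.symm)^[n] ϑ) (-M)) ∧
      Tendsto (fun n => fiter S f n ((⇑S.symm)^[n] ϑ) (-M)) atTop (nhds (φm ϑ)))
    (θ θ' : Θ)
    (hstable : ∀ n : ℕ, 0 < n →
      dist ((⇑S.symm)^[n] θ) ((⇑S.symm)^[n] θ') ≤ C * α ^ n * dist θ θ') :
    (∀ n k : ℕ, ∀ w ∈ Icc (-M) M,
      |fiter S f n ((⇑S.symm)^[n] θ') (fiter S f k ((⇑S.symm)^[n + k] θ) w)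
          - fiter S f (n + k) ((⇑S.symm)^[n + k] θ') w|
        ≤ (α * C * L / (1 - α * Qf)) * (α * Qf) ^ n * dist θ θ') ∧
    ∃ G : ℝ → ℝ, TendstoUniformlyOn
      (fun n y => fiter S f n ((⇑S.symm)^[n] θ')
        (Function.invFunOn (fiter S f n ((⇑S.symm)^[n] θ)) (Icc (-M) M) y))
      G atTop (Icc (φm θ) (φp θ)) := by
  have h0I : (0:ℝ) ∈ Icc (-M) M := by constructor <;> linarith
  have hQ0 : (0:ℝ) < Qf := lt_of_lt_of_le (hpos θ 0 h0I) (hQf θ 0 h0I)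
  have hα0 : (0:ℝ) < α := hα.1
  have hαQ0 : (0:ℝ) ≤ α * Qf := le_of_lt (mul_pos hα0 hQ0)
  have h1αQ : (0:ℝ) < 1 - α * Qf := by linarith
  have hD0 : (0:ℝ) ≤ dist θ θ' := dist_nonneg
  have steplip : ∀ n ϑ, ∀ a ∈ Icc (-M) M, ∀ b ∈ Icc (-M) M,
      |fiter S f n ϑ a - fiter S f n ϑ b| ≤ Qf ^ n * |a - b| :=
    fiter_lip S f hM hmaps hC1 hpos hQf
  -- geometric sum bound
  have hsum : ∀ k : ℕ, (∑ i ∈ Finset.range k, (α * Qf) ^ i) ≤ 1 / (1 - α * Qf) := by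
    intro k
    rw [le_div_iff₀ h1αQ]
    have h1 := geom_sum_mul (α * Qf) k
    have hpk : (0:ℝ) ≤ (α * Qf) ^ k := pow_nonneg hαQ0 k
    nlinarith [h1]
  have hsum0 : ∀ k : ℕ, (0:ℝ) ≤ ∑ i ∈ Finset.range k, (α * Qf) ^ i := fun k =>
    Finset.sum_nonneg fun i _ => pow_nonneg hαQ0 i
  -- key telescoping claim
  have claim : ∀ k n : ℕ, ∀ w ∈ Icc (-M) M,
      |fiter S f k ((⇑S.symm)^[n + k] θ) w - fiter S f k ((⇑S.symm)^[n + k] θ') w|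
        ≤ L * C * dist θ θ' * α ^ (n + 1) * ∑ i ∈ Finset.range k, (α * Qf) ^ i := by
    intro k
    induction k with
    | zero =>
        intro n w _
        simp [fiter]
    | succ k ih =>
        intro n w hw
        have hrw : n + (k + 1) = (n + 1) + k := by omega
        set A := fiter S f k ((⇑S.symm)^[(n+1) + k] θ) w with hA
        set B := fiter S f k ((⇑S.symm)^[(n+1) + k] θ') w with hB
        have hAI : A ∈ Icc (-M) M := fiter_mapsTo S f hmaps k _ hw
        have hBI : B ∈ Icc (-M) M := fiter_mapsTo S f hmaps k _ hw
        have hLHS : fiter S f (k+1) ((⇑S.symm)^[n + (k+1)] θ) w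
              = f ((⇑S.symm)^[n+1] θ) A ∧
            fiter S f (k+1) ((⇑S.symm)^[n + (k+1)] θ') w
              = f ((⇑S.symm)^[n+1] θ') B := by
          constructor <;>
          · rw [hrw, fiter_succ, iter_cancel S k (n+1)]
        rw [hLHS.1, hLHS.2]
        have hstep1 : |f ((⇑S.symm)^[n+1] θ) A - f ((⇑S.symm)^[n+1] θ) B|
            ≤ Qf * |A - B| := by
          have := steplip 1 ((⇑S.symm)^[n+1] θ) A hAI B hBI
          simpa [fiter, pow_one] using this
        have hstep2 : |f ((⇑S.symm)^[n+1] θ) B - f ((⇑S.symm)^[n+1] θ') B|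
            ≤ L * (C * α ^ (n+1) * dist θ θ') := by
          calc |f ((⇑S.symm)^[n+1] θ) B - f ((⇑S.symm)^[n+1] θ') B|
              ≤ L * dist ((⇑S.symm)^[n+1] θ) ((⇑S.symm)^[n+1] θ') := hLip _ _ B hBI
            _ ≤ L * (C * α ^ (n+1) * dist θ θ') :=
                mul_le_mul_of_nonneg_left (hstable (n+1) (Nat.succ_pos n)) hL
        have hAB : |A - B| ≤ L * C * dist θ θ' * α ^ ((n+1) + 1)
            * ∑ i ∈ Finset.range k, (α * Qf) ^ i := ih (n+1) w hw
        have hQnn : (0:ℝ) ≤ Qf := le_of_lt hQ0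
        calc |f ((⇑S.symm)^[n+1] θ) A - f ((⇑S.symm)^[n+1] θ') B|
            ≤ |f ((⇑S.symm)^[n+1] θ) A - f ((⇑S.symm)^[n+1] θ) B|
              + |f ((⇑S.symm)^[n+1] θ) B - f ((⇑S.symm)^[n+1] θ') B| := by
              have := abs_sub_abs_le_abs_sub (f ((⇑S.symm)^[n+1] θ) A) (f ((⇑S.symm)^[n+1] θ') B)
              exact abs_sub_le _ _ _
          _ ≤ Qf * (L * C * dist θ θ' * α ^ ((n+1) + 1)
                * ∑ i ∈ Finset.range k, (α * Qf) ^ i)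
              + L * (C * α ^ (n+1) * dist θ θ') := by
              exact add_le_add (le_trans hstep1 (mul_le_mul_of_nonneg_left hAB hQnn)) hstep2
          _ = L * C * dist θ θ' * α ^ (n + 1)
                * ((α * Qf) * ∑ i ∈ Finset.range k, (α * Qf) ^ i + 1) := by ring
          _ = L * C * dist θ θ' * α ^ (n + 1)
                * ∑ i ∈ Finset.range (k+1), (α * Qf) ^ i := by
              rw [geom_sum_succ]
  -- Part 1
  have part1 : ∀ n k : ℕ, ∀ w ∈ Icc (-M) M,
      |fiter S f n ((⇑S.symm)^[n] θ') (fiter S f k ((⇑S.symm)^[n + k] θ) w)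
          - fiter S f (n + k) ((⇑S.symm)^[n + k] θ') w|
        ≤ (α * C * L / (1 - α * Qf)) * (α * Qf) ^ n * dist θ θ' := by
    intro n k w hw
    set A := fiter S f k ((⇑S.symm)^[n + k] θ) w with hA
    set B := fiter S f k ((⇑S.symm)^[n + k] θ') w with hB
    have hAI : A ∈ Icc (-M) M := fiter_mapsTo S f hmaps k _ hw
    have hBI : B ∈ Icc (-M) M := fiter_mapsTo S f hmaps k _ hw
    have hcomp : fiter S f (n + k) ((⇑S.symm)^[n + k] θ') w
        = fiter S f n ((⇑S.symm)^[n] θ') B := by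
      rw [fiter_add, iter_cancel S k n]
    rw [hcomp]
    have h1 : |fiter S f n ((⇑S.symm)^[n] θ') A - fiter S f n ((⇑S.symm)^[n] θ') B|
        ≤ Qf ^ n * |A - B| := steplip n _ A hAI B hBI
    have h2 : |A - B| ≤ L * C * dist θ θ' * α ^ (n + 1)
        * ∑ i ∈ Finset.range k, (α * Qf) ^ i := claim k n w hw
    have h3 : |A - B| ≤ L * C * dist θ θ' * α ^ (n + 1) * (1 / (1 - α * Qf)) := by
      refine le_trans h2 (mul_le_mul_of_nonneg_left (hsum k) ?_)
      positivity
    calc |fiter S f n ((⇑S.symm)^[n] θ') A - fiter S f n ((⇑S.symm)^[n] θ') B|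
        ≤ Qf ^ n * |A - B| := h1
      _ ≤ Qf ^ n * (L * C * dist θ θ' * α ^ (n + 1) * (1 / (1 - α * Qf))) :=
          mul_le_mul_of_nonneg_left h3 (pow_nonneg (le_of_lt hQ0) n)
      _ = (α * C * L / (1 - α * Qf)) * (α * Qf) ^ n * dist θ θ' := by
          rw [mul_pow, pow_succ]
          field_simp
  refine ⟨part1, ?_⟩
  -- Part 2
  set s : Set ℝ := Icc (φm θ) (φp θ) with hs
  set F : ℕ → ℝ → ℝ := fun n y => fiter S f n ((⇑S.symm)^[n] θ')
      (Function.invFunOn (fiter S f n ((⇑S.symm)^[n] θ)) (Icc (-M) M) y) with hF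
  have hMI : M ∈ Icc (-M) M := by constructor <;> linarith
  have hmMI : -M ∈ Icc (-M) M := by constructor <;> linarith
  -- surjectivity onto K(θ)
  have hsurj : ∀ n : ℕ, ∀ y ∈ s, ∃ w ∈ Icc (-M) M,
      fiter S f n ((⇑S.symm)^[n] θ) w = y := by
    intro n y hy
    have hlo : fiter S f n ((⇑S.symm)^[n] θ) (-M) ≤ φm θ :=
      (hφm θ).1.ge_of_tendsto (hφm θ).2 n
    have hhi : φp θ ≤ fiter S f n ((⇑S.symm)^[n] θ) M :=
      (hφp θ).1.le_of_tendsto (hφp θ).2 n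
    have hy' : y ∈ Icc (fiter S f n ((⇑S.symm)^[n] θ) (-M))
        (fiter S f n ((⇑S.symm)^[n] θ) M) :=
      ⟨le_trans hlo hy.1, le_trans hy.2 hhi⟩
    have := intermediate_value_Icc (by linarith : -M ≤ M)
      (fiter_cont S f hC1 hmaps n ((⇑S.symm)^[n] θ)) hy'
    obtain ⟨w, hw, hfw⟩ := this
    exact ⟨w, hw, hfw⟩
  have hinv : ∀ n : ℕ, ∀ y ∈ s,
      Function.invFunOn (fiter S f n ((⇑S.symm)^[n] θ)) (Icc (-M) M) y ∈ Icc (-M) M ∧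
      fiter S f n ((⇑S.symm)^[n] θ)
        (Function.invFunOn (fiter S f n ((⇑S.symm)^[n] θ)) (Icc (-M) M) y) = y := by
    intro n y hy
    obtain ⟨w, hw, hfw⟩ := hsurj n y hy
    exact ⟨Function.invFunOn_mem ⟨w, hw, hfw⟩, Function.invFunOn_eq ⟨w, hw, hfw⟩⟩
  -- key Cauchy estimate
  have key : ∀ n k : ℕ, ∀ y ∈ s,
      |F n y - F (n + k) y|
        ≤ (α * C * L / (1 - α * Qf)) * (α * Qf) ^ n * dist θ θ' := by
    intro n k y hy
    set w := Function.invFunOn (fiter S f (n+k) ((⇑S.symm)^[n+k] θ)) (Icc (-M) M) y with hwdef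
    have hwI : w ∈ Icc (-M) M := (hinv (n+k) y hy).1
    have hwy : fiter S f (n+k) ((⇑S.symm)^[n+k] θ) w = y := (hinv (n+k) y hy).2
    set A := fiter S f k ((⇑S.symm)^[n + k] θ) w with hA
    have hAI : A ∈ Icc (-M) M := fiter_mapsTo S f hmaps k _ hwI
    have hAy : fiter S f n ((⇑S.symm)^[n] θ) A = y := by
      rw [← hwy, fiter_add, iter_cancel S k n]
    have hinj : Set.InjOn (fiter S f n ((⇑S.symm)^[n] θ)) (Icc (-M) M) :=
      (fiter_mono S f hmaps hmono n _).injOn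
    have hveq : Function.invFunOn (fiter S f n ((⇑S.symm)^[n] θ)) (Icc (-M) M) y = A := by
      apply hinj (hinv n y hy).1 hAI
      rw [(hinv n y hy).2, hAy]
    have hFn : F n y = fiter S f n ((⇑S.symm)^[n] θ') A := by
      rw [hF]; simp only; rw [hveq]
    have hFnk : F (n + k) y = fiter S f (n+k) ((⇑S.symm)^[n+k] θ') w := rfl
    rw [hFn, hFnk]
    exact part1 n k w hwI
  -- uniform Cauchy
  have hgeo : Tendsto (fun n : ℕ => (α * C * L / (1 - α * Qf)) * (α * Qf) ^ n * dist θ θ')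
      atTop (nhds 0) := by
    have h := tendsto_pow_atTop_nhds_zero_of_lt_one hαQ0 hαQ
    have := (h.const_mul (α * C * L / (1 - α * Qf))).mul_const (dist θ θ')
    simpa using this
  have hbound_nonneg : ∀ n : ℕ,
      (0:ℝ) ≤ (α * C * L / (1 - α * Qf)) * (α * Qf) ^ n * dist θ θ' := by
    intro n; positivity
  have hUC : UniformCauchySeqOn F atTop s := by
    rw [Metric.uniformCauchySeqOn_iff]
    intro ε hε
    rcases Metric.tendsto_atTop.1 hgeo ε hε with ⟨N, hN⟩
    refine ⟨N, fun m hm n hn y hy => ?_⟩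
    have hb : ∀ p q : ℕ, p ≤ q → dist (F p y) (F q y)
        ≤ (α * C * L / (1 - α * Qf)) * (α * Qf) ^ p * dist θ θ' := by
      intro p q hpq
      obtain ⟨k, rfl⟩ := Nat.exists_eq_add_of_le hpq
      rw [Real.dist_eq]
      exact key p k y hy
    have hmono' : ∀ p : ℕ, N ≤ p →
        (α * C * L / (1 - α * Qf)) * (α * Qf) ^ p * dist θ θ' < ε := by
      intro p hp
      have := hN p hp
      rw [Real.dist_eq, sub_zero, abs_of_nonneg (hbound_nonneg p)] at this
      exact this
    rcases le_total m n with h | h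
    · exact lt_of_le_of_lt (hb m n h) (hmono' m hm)
    · rw [dist_comm]
      exact lt_of_le_of_lt (hb n m h) (hmono' n hn)
  -- pointwise limits
  have hptwise : ∀ y ∈ s, ∃ l : ℝ, Tendsto (fun n => F n y) atTop (nhds l) := by
    intro y hy
    have hc : CauchySeq (fun n => F n y) := by
      rw [Metric.cauchySeq_iff]
      intro ε hε
      rcases Metric.uniformCauchySeqOn_iff.1 hUC ε hε with ⟨N, hN⟩
      exact ⟨N, fun m hm n hn => hN m hm n hn y hy⟩
    exact cauchySeq_tendsto_of_complete hc
  classical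
  refine ⟨fun y => if h : ∃ l : ℝ, Tendsto (fun n => F n y) atTop (nhds l)
    then h.choose else 0, ?_⟩
  apply hUC.tendstoUniformlyOn_of_tendsto
  intro y hy
  have h := hptwise y hy
  rw [dif_pos h]
  exact h.choose_spec
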